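/- Let (P,G,B) be a transversal design TD(3,α) with α > 3. Then for every 1 ≤ i ≤ 4 and every set of i distinct blocks of B, the union of these blocks contains at least i + 2 points. -/
import Mathlib

/-- A transversal design `TD(ℓ, h)`: `Gr` is a partition of the point set `P`
(of size `ℓh`) into `ℓ` groups of size `h`; `B` is a collection of blocks,
each an `ℓ`-subset of `P` meeting every group in exactly one point, such that
any pair of points from different groups lies in exactly one block. -/
structure IsTransversalDesign {P : Type*} [Fintype P] [DecidableEq P]
    (ℓ h : ℕ) (Gr : Finset (Finset P)) (B : Finset (Finset P)) : Prop where
  card_points : Fintype.card P = ℓ * h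
  card_groups : Gr.card = ℓ
  group_card : ∀ g ∈ Gr, g.card = h
  groups_disjoint : ∀ g₁ ∈ Gr, ∀ g₂ ∈ Gr, g₁ ≠ g₂ → Disjoint g₁ g₂
  groups_cover : ∀ p : P, ∃ g ∈ Gr, p ∈ g
  block_card : ∀ b ∈ B, b.card = ℓ
  block_meets_group : ∀ b ∈ B, ∀ g ∈ Gr, (b ∩ g).card = 1
  pairs_covered : ∀ p q : P, ∀ g₁ ∈ Gr, ∀ g₂ ∈ Gr, g₁ ≠ g₂ → p ∈ g₁ → q ∈ g₂ →
    ∃! b, b ∈ B ∧ p ∈ b ∧ q ∈ b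

/-- Two distinct blocks of a transversal design intersect in at most one point. -/
lemma td_blocks_inter_le_one {P : Type*} [Fintype P] [DecidableEq P]
    {ℓ h : ℕ} {Gr B : Finset (Finset P)} (hTD : IsTransversalDesign ℓ h Gr B)
    {b₁ b₂ : Finset P} (hb₁ : b₁ ∈ B) (hb₂ : b₂ ∈ B) (hne : b₁ ≠ b₂) :
    (b₁ ∩ b₂).card ≤ 1 := by
  by_contra hcon
  push_neg at hcon
  obtain ⟨p, hp, q, hq, hpq⟩ := Finset.one_lt_card.mp hcon
  simp only [Finset.mem_inter] at hp hq
  obtain ⟨g₁, hg₁, hpg₁⟩ := hTD.groups_cover p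
  obtain ⟨g₂, hg₂, hqg₂⟩ := hTD.groups_cover q
  have hgne : g₁ ≠ g₂ := by
    rintro rfl
    have h1 := hTD.block_meets_group b₁ hb₁ g₁ hg₁
    have : 1 < (b₁ ∩ g₁).card := Finset.one_lt_card.mpr
      ⟨p, Finset.mem_inter.mpr ⟨hp.1, hpg₁⟩, q, Finset.mem_inter.mpr ⟨hq.1, hqg₂⟩, hpq⟩
    omega
  obtain ⟨b, _, hb_unique⟩ := hTD.pairs_covered p q g₁ hg₁ g₂ hg₂ hgne hpg₁ hqg₂
  exact hne ((hb_unique b₁ ⟨hb₁, hp.1, hq.1⟩).trans (hb_unique b₂ ⟨hb₂, hp.2, hq.2⟩).symm)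

lemma td3_union_bound {P : Type*} [Fintype P] [DecidableEq P]
    {α : ℕ} {Gr B : Finset (Finset P)} (hTD : IsTransversalDesign 3 α Gr B) :
    ∀ S : Finset (Finset P), S ⊆ B →
      7 * S.card ≤ 2 * (S.sup id).card + S.card * S.card := by
  intro S
  induction S using Finset.induction with
  | empty => simp
  | @insert a S ha ih =>
    intro hsub
    have haB : a ∈ B := hsub (Finset.mem_insert_self a S)
    have hSB : S ⊆ B := fun x hx => hsub (Finset.mem_insert_of_mem hx)
    have IH := ih hSB
    have hacard : a.card = 3 := hTD.block_card a haB
    -- bound on |a ∩ sup S|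
    have hinter : (a ∩ S.sup id).card ≤ S.card := by
      have hsubset : a ∩ S.sup id ⊆ S.biUnion (fun s => a ∩ s) := by
        intro x hx
        simp only [Finset.mem_inter, Finset.mem_sup, id_eq] at hx
        obtain ⟨hxa, s, hs, hxs⟩ := hx
        exact Finset.mem_biUnion.mpr ⟨s, hs, Finset.mem_inter.mpr ⟨hxa, hxs⟩⟩
      calc (a ∩ S.sup id).card ≤ (S.biUnion (fun s => a ∩ s)).card :=
            Finset.card_le_card hsubset
        _ ≤ ∑ s ∈ S, (a ∩ s).card := Finset.card_biUnion_le
        _ ≤ ∑ _s ∈ S, 1 := Finset.sum_le_sum (fun s hs =>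
            td_blocks_inter_le_one hTD haB (hSB hs) (fun h => ha (h ▸ hs)))
        _ = S.card := by simp
    have hsup : (insert a S).sup id = a ∪ S.sup id := by
      rw [Finset.sup_insert]; rfl
    have hcards : (a ∪ S.sup id).card + (a ∩ S.sup id).card
        = a.card + (S.sup id).card := Finset.card_union_add_card_inter a (S.sup id)
    rw [hsup, Finset.card_insert_of_notMem ha]
    have hsq : (S.card+1)*(S.card+1) = S.card*S.card + 2*S.card + 1 := by ring
    omega

/-- In a `TD(3,α)` with `α > 3`, any `i` distinct blocks, `1 ≤ i ≤ 4`,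
cover at least `i + 2` points. -/
theorem td3_deficiency_hall {P : Type*} [Fintype P] [DecidableEq P]
    (α : ℕ) (hα : 3 < α) (Gr B : Finset (Finset P))
    (hTD : IsTransversalDesign 3 α Gr B) :
    ∀ S : Finset (Finset P), S ⊆ B → 1 ≤ S.card → S.card ≤ 4 →
      S.card + 2 ≤ (S.sup id).card := by
  intro S hsub h1 h4
  have hb := td3_union_bound hTD S hsub
  set n := S.card with hn
  interval_cases n <;> omega
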